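/- Let π_n(k) = (λ^k/k!)/(∑_{j=0}^n λ^j/j!) be the truncated Poisson distribution with parameter λ ≥ 1 and λ ≤ n (λ a positive integer). Then for all 1 ≤ k ≤ n: (λ/k)^k · e^{k−λ−1/(12k)}/√(2πk) < π_n(k) < (λ/k)^{k+1/2} · e^{k−λ+1/(12λ)}. -/

import Mathlib

section StirlingAux
open Real Filter Finset Stirling

lemma sqrtpi_le_stirlingSeq (m : ℕ) : Real.sqrt π ≤ stirlingSeq (m + 1) :=
  Stirling.stirlingSeq'_antitone.le_of_tendsto
    (tendsto_stirlingSeq_sqrt_pi.comp (tendsto_add_atTop_nat 1)) m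

lemma stirling_step (n : ℕ) :
    Real.log (stirlingSeq (n + 1)) - Real.log (stirlingSeq (n + 2)) ≤
      1 / (12 * ((n : ℝ) + 1)) - 1 / (12 * ((n : ℝ) + 2)) := by
  have h_nonneg : (0 : ℝ) ≤ ((1 : ℝ) / (2 * ↑(n + 1) + 1)) ^ 2 := sq_nonneg _
  have g0 : HasSum (fun k : ℕ => (((1 : ℝ) / (2 * ↑(n + 1) + 1)) ^ 2) ^ (k + 1))
      (((1 : ℝ) / (2 * ↑(n + 1) + 1)) ^ 2 / (1 - ((1 : ℝ) / (2 * ↑(n + 1) + 1)) ^ 2)) := by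
    have := (hasSum_geometric_of_lt_one h_nonneg ?_).mul_left (((1 : ℝ) / (2 * ↑(n + 1) + 1)) ^ 2)
    · simp_rw [← _root_.pow_succ'] at this
      exact this
    rw [one_div, inv_pow]
    exact inv_lt_one_of_one_lt₀ (one_lt_pow₀ (lt_add_of_pos_left _ <| by positivity) two_ne_zero)
  have g := g0.mul_left ((1 : ℝ) / 3)
  have hab : ∀ k : ℕ, (1 : ℝ) / (2 * ↑(k + 1) + 1) * ((1 / (2 * ↑(n + 1) + 1)) ^ 2) ^ (k + 1) ≤
      (1 : ℝ) / 3 * (((1 : ℝ) / (2 * ↑(n + 1) + 1)) ^ 2) ^ (k + 1) := by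
    intro k
    apply mul_le_mul_of_nonneg_right _ (pow_nonneg h_nonneg _)
    rw [div_le_div_iff₀ (by positivity) (by norm_num)]
    have : (0 : ℝ) ≤ (k : ℝ) := Nat.cast_nonneg k
    push_cast
    nlinarith
  have key := hasSum_le hab (log_stirlingSeq_diff_hasSum n) g
  refine key.trans (le_of_eq ?_)
  have hpos : (0 : ℝ) < 2 * ↑(n + 1) + 1 := by positivity
  have h1m : (0 : ℝ) < 1 - ((1 : ℝ) / (2 * ↑(n + 1) + 1)) ^ 2 := by
    have : ((1 : ℝ) / (2 * ↑(n + 1) + 1)) ^ 2 < 1 := by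
      rw [one_div, inv_pow]
      exact inv_lt_one_of_one_lt₀ (one_lt_pow₀ (lt_add_of_pos_left _ <| by positivity) two_ne_zero)
    linarith
  have hn1 : ((n : ℝ) + 1) ≠ 0 := by positivity
  have hn2 : ((n : ℝ) + 2) ≠ 0 := by positivity
  field_simp [h1m.ne', hpos.ne']
  push_cast
  ring_nf
  have h3 : (24 + (n:ℝ) * 36 + (n:ℝ)^2*12) ≠ 0 := by positivity
  field_simp [h3]
  ring

lemma stirlingSeq_le (m : ℕ) :
    stirlingSeq (m + 1) ≤ Real.sqrt π * Real.exp (1 / (12 * ((m : ℝ) + 1))) := by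
  have tele : ∀ N : ℕ, Real.log (stirlingSeq (m + 1)) - Real.log (stirlingSeq (m + N + 1)) ≤
      1 / (12 * ((m : ℝ) + 1)) - 1 / (12 * ((m : ℝ) + N + 1)) := by
    intro N
    induction N with
    | zero => simp
    | succ N ih =>
      have h := stirling_step (m + N)
      have : ((m + N : ℕ) : ℝ) = (m : ℝ) + N := by push_cast; ring
      rw [this] at h
      have e1 : m + (N + 1) + 1 = (m + N) + 2 := by ring
      have e2 : m + N + 1 = (m + N) + 1 := by ring
      rw [e1]
      push_cast
      rw [e2] at ih
      push_cast at ih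
      have e3 : 1 / (12 * ((m : ℝ) + (↑N + 1) + 1)) = 1 / (12 * ((m : ℝ) + ↑N + 2)) := by
        ring_nf
      rw [e3]
      linarith
  have hlim : Filter.Tendsto (fun N : ℕ => Real.log (stirlingSeq (m + N + 1)))
      Filter.atTop (nhds (Real.log (Real.sqrt π))) := by
    have h1 : Filter.Tendsto (fun N : ℕ => stirlingSeq (m + N + 1)) Filter.atTop
        (nhds (Real.sqrt π)) := by
      have : Filter.Tendsto (fun N : ℕ => m + N + 1) Filter.atTop Filter.atTop :=
        Filter.tendsto_atTop_mono (fun N => by simp only [id_eq]; omega) Filter.tendsto_id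
      exact tendsto_stirlingSeq_sqrt_pi.comp this
    exact ((Real.continuousAt_log (by positivity)).tendsto.comp h1)
  have hbound : Real.log (stirlingSeq (m + 1)) - 1 / (12 * ((m : ℝ) + 1)) ≤
      Real.log (Real.sqrt π) := by
    refine ge_of_tendsto hlim (Filter.Eventually.of_forall fun N => ?_)
    have := tele N
    have hpos : (0 : ℝ) < 1 / (12 * ((m : ℝ) + N + 1)) := by positivity
    linarith
  have := Real.exp_le_exp.2 (by linarith : Real.log (stirlingSeq (m + 1)) ≤
      Real.log (Real.sqrt π) + 1 / (12 * ((m : ℝ) + 1)))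
  rwa [Real.exp_log (stirlingSeq'_pos m), Real.exp_add, Real.exp_log (by positivity)] at this

lemma fact_ge (m : ℕ) (hm : 0 < m) :
    Real.sqrt (2 * π * m) * ((m : ℝ) / Real.exp 1) ^ m ≤ (m.factorial : ℝ) := by
  obtain ⟨j, rfl⟩ : ∃ j, m = j + 1 := ⟨m - 1, by omega⟩
  have hd : (0 : ℝ) < Real.sqrt (2 * ((j : ℕ) + 1 : ℕ)) * ((((j : ℕ) + 1 : ℕ) : ℝ) / Real.exp 1) ^ (j + 1) := by
    positivity
  have hs : stirlingSeq (j + 1) * (Real.sqrt (2 * ((j + 1 : ℕ) : ℝ)) *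
      (((j + 1 : ℕ) : ℝ) / Real.exp 1) ^ (j + 1)) = ((j + 1).factorial : ℝ) := by
    rw [stirlingSeq]
    field_simp
  have h1 := mul_le_mul_of_nonneg_right (sqrtpi_le_stirlingSeq j) (le_of_lt hd)
  rw [hs] at h1
  refine le_trans (le_of_eq ?_) h1
  rw [show (2 * π * ((j + 1 : ℕ) : ℝ)) = π * (2 * ((j + 1 : ℕ) : ℝ)) by ring,
    Real.sqrt_mul Real.pi_pos.le]
  push_cast
  ring

lemma fact_le (m : ℕ) (hm : 0 < m) :
    (m.factorial : ℝ) ≤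
      Real.sqrt (2 * π * m) * ((m : ℝ) / Real.exp 1) ^ m * Real.exp (1 / (12 * m)) := by
  obtain ⟨j, rfl⟩ : ∃ j, m = j + 1 := ⟨m - 1, by omega⟩
  have hd : (0 : ℝ) < Real.sqrt (2 * ((j : ℕ) + 1 : ℕ)) * ((((j : ℕ) + 1 : ℕ) : ℝ) / Real.exp 1) ^ (j + 1) := by
    positivity
  have hs : stirlingSeq (j + 1) * (Real.sqrt (2 * ((j + 1 : ℕ) : ℝ)) *
      (((j + 1 : ℕ) : ℝ) / Real.exp 1) ^ (j + 1)) = ((j + 1).factorial : ℝ) := by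
    rw [stirlingSeq]
    field_simp
  have h1 := mul_le_mul_of_nonneg_right (stirlingSeq_le j) (le_of_lt hd)
  rw [hs] at h1
  refine h1.trans (le_of_eq ?_)
  rw [show (2 * π * ((j + 1 : ℕ) : ℝ)) = π * (2 * ((j + 1 : ℕ) : ℝ)) by ring,
    Real.sqrt_mul Real.pi_pos.le]
  push_cast
  ring

end StirlingAux

/-- Truncated Poisson bounds: with `π_n(k) = (λ^k/k!)/(∑_{j=0}^n λ^j/j!)`, `λ` a positive
integer with `1 ≤ λ ≤ n`, for all `1 ≤ k ≤ n`:
`(λ/k)^k·e^{k−λ−1/(12k)}/√(2πk) < π_n(k) < (λ/k)^{k+1/2}·e^{k−λ+1/(12λ)}`. -/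
theorem stmt_11 (n lam : ℕ) (hlam1 : 1 ≤ lam) (hlamn : lam ≤ n) (k : ℕ)
    (hk1 : 1 ≤ k) (hkn : k ≤ n)
    (π : ℕ → ℝ)
    (hπ : ∀ m, π m = ((lam : ℝ) ^ m / (Nat.factorial m))
        / ∑ j ∈ Finset.range (n + 1), (lam : ℝ) ^ j / (Nat.factorial j)) :
    ((lam : ℝ) / k) ^ k * Real.exp ((k : ℝ) - lam - 1 / (12 * k))
        / Real.sqrt (2 * Real.pi * k) < π k ∧
    π k < ((lam : ℝ) / k) ^ ((k : ℝ) + 1 / 2)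
        * Real.exp ((k : ℝ) - lam + 1 / (12 * lam)) := by
  have hlamR : (1 : ℝ) ≤ (lam : ℝ) := by exact_mod_cast hlam1
  have hkR : (1 : ℝ) ≤ (k : ℝ) := by exact_mod_cast hk1
  have hlam0 : (0 : ℝ) < (lam : ℝ) := by linarith
  have hk0 : (0 : ℝ) < (k : ℝ) := by linarith
  have hfk : (0 : ℝ) < (Nat.factorial k : ℝ) := by exact_mod_cast k.factorial_pos
  have hfl : (0 : ℝ) < (Nat.factorial lam : ℝ) := by exact_mod_cast lam.factorial_pos
  set S : ℝ := ∑ j ∈ Finset.range (n + 1), (lam : ℝ) ^ j / (Nat.factorial j) with hS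
  have hnum : (0 : ℝ) < (lam : ℝ) ^ k / (Nat.factorial k) := by positivity
  -- S < exp lam
  have hS_lt : S < Real.exp lam := by
    have h1 : ∑ j ∈ Finset.range (n + 2), (lam : ℝ) ^ j / (Nat.factorial j) ≤ Real.exp lam :=
      Real.sum_le_exp_of_nonneg hlam0.le _
    rw [Finset.sum_range_succ] at h1
    have h2 : (0 : ℝ) < (lam : ℝ) ^ (n + 1) / (Nat.factorial (n + 1)) := by positivity
    linarith
  -- lam^lam / lam! < S
  have hS_gt : (lam : ℝ) ^ lam / (Nat.factorial lam) < S := by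
    have hsub : ({0, lam} : Finset ℕ) ⊆ Finset.range (n + 1) := by
      intro x hx
      simp only [Finset.mem_insert, Finset.mem_singleton] at hx
      rcases hx with rfl | rfl <;> simp [Finset.mem_range] <;> omega
    have hpair : ∑ j ∈ ({0, lam} : Finset ℕ), (lam : ℝ) ^ j / (Nat.factorial j) ≤ S := by
      refine Finset.sum_le_sum_of_subset_of_nonneg hsub fun i _ _ => by positivity
    rw [Finset.sum_pair (by omega : (0 : ℕ) ≠ lam)] at hpair
    simp only [pow_zero, Nat.factorial_zero, Nat.cast_one] at hpair
    linarith
  have hS_pos : (0 : ℝ) < S := lt_trans (by positivity) hS_gt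
  rw [hπ]
  constructor
  · -- lower bound
    have step1 : ((lam : ℝ) ^ k / (Nat.factorial k)) / Real.exp lam <
        ((lam : ℝ) ^ k / (Nat.factorial k)) / S :=
      div_lt_div_of_pos_left hnum hS_pos hS_lt
    refine lt_of_le_of_lt ?_ step1
    have hfle := fact_le k hk1
    set D : ℝ := Real.sqrt (2 * Real.pi * k) * ((k : ℝ) / Real.exp 1) ^ k
      * Real.exp (1 / (12 * k)) with hD
    have hDpos : (0 : ℝ) < D := by rw [hD]; positivity
    have step2 : (lam : ℝ) ^ k / D ≤ (lam : ℝ) ^ k / (Nat.factorial k) :=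
      div_le_div_of_nonneg_left (by positivity) hfk hfle
    have step3 : ((lam : ℝ) ^ k / D) / Real.exp lam ≤
        ((lam : ℝ) ^ k / (Nat.factorial k)) / Real.exp lam :=
      div_le_div_of_nonneg_right step2 (Real.exp_pos _).le |>.trans_eq rfl
    refine le_trans (le_of_eq ?_) step3
    rw [hD]
    have hek : Real.exp ((k : ℝ)) = Real.exp 1 ^ k := by
      rw [← Real.exp_nat_mul]; simp
    rw [Real.exp_sub, Real.exp_sub, hek]
    have hsq : Real.sqrt (2 * Real.pi * k) ≠ 0 := by positivity
    field_simp
    have hK : (k:ℝ)^k * (k:ℝ)⁻¹^k = 1 := by rw [← mul_pow, mul_inv_cancel₀ hk0.ne', one_pow]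
    have hE : Real.exp 1 ^ k * (Real.exp 1)⁻¹ ^ k = 1 := by
      rw [← mul_pow, mul_inv_cancel₀ (Real.exp_pos 1).ne', one_pow]
    linear_combination ((lam:ℝ)^k * Real.exp 1 ^ k * (Real.exp 1)⁻¹ ^ k) * hK + (lam:ℝ)^k * hE
  · -- upper bound
    have step1 : ((lam : ℝ) ^ k / (Nat.factorial k)) / S <
        ((lam : ℝ) ^ k / (Nat.factorial k)) / ((lam : ℝ) ^ lam / (Nat.factorial lam)) :=
      div_lt_div_of_pos_left hnum (by positivity) hS_gt
    refine lt_of_lt_of_le step1 ?_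
    have hfge := fact_ge k hk1
    have hfle := fact_le lam hlam1
    set A : ℝ := Real.sqrt (2 * Real.pi * k) * ((k : ℝ) / Real.exp 1) ^ k with hA
    set B : ℝ := Real.sqrt (2 * Real.pi * lam) * ((lam : ℝ) / Real.exp 1) ^ lam
      * Real.exp (1 / (12 * lam)) with hB
    have hApos : (0 : ℝ) < A := by rw [hA]; positivity
    have hBpos : (0 : ℝ) < B := by rw [hB]; positivity
    have step2 : ((lam : ℝ) ^ k / (Nat.factorial k)) / ((lam : ℝ) ^ lam / (Nat.factorial lam)) ≤
        ((lam : ℝ) ^ k / A) / ((lam : ℝ) ^ lam / B) := by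
      refine div_le_div₀ (by positivity) (div_le_div_of_nonneg_left (by positivity) hApos hfge)
        (by positivity) (div_le_div_of_nonneg_left (by positivity) hfl hfle)
    refine step2.trans (le_of_eq ?_)
    have hrp : ((lam : ℝ) / k) ^ ((k : ℝ) + 1 / 2) =
        ((lam : ℝ) / k) ^ k * Real.sqrt ((lam : ℝ) / k) := by
      rw [Real.rpow_add (by positivity), Real.rpow_natCast, ← Real.sqrt_eq_rpow]
    rw [hrp, hA, hB]
    have hek : Real.exp ((k : ℝ)) = Real.exp 1 ^ k := by rw [← Real.exp_nat_mul]; simp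
    have hel : Real.exp ((lam : ℝ)) = Real.exp 1 ^ lam := by rw [← Real.exp_nat_mul]; simp
    rw [Real.exp_add, Real.exp_sub, hek, hel]
    rw [show (2 * Real.pi * (k : ℝ)) = (2 * Real.pi) * (k : ℝ) by ring,
      show (2 * Real.pi * (lam : ℝ)) = (2 * Real.pi) * (lam : ℝ) by ring,
      Real.sqrt_mul (by positivity : (0:ℝ) ≤ 2 * Real.pi),
      Real.sqrt_mul (by positivity : (0:ℝ) ≤ 2 * Real.pi),
      Real.sqrt_div hlam0.le]
    have h1 : Real.sqrt (2 * Real.pi) ≠ 0 := by positivity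
    have h2 : Real.sqrt ((k : ℝ)) ≠ 0 := by positivity
    have h3 : Real.sqrt ((lam : ℝ)) ≠ 0 := by positivity
    field_simp
    have hK : (k:ℝ)^k * (k:ℝ)⁻¹^k = 1 := by rw [← mul_pow, mul_inv_cancel₀ hk0.ne', one_pow]
    have hE : Real.exp 1 ^ k * (Real.exp 1)⁻¹ ^ k = 1 := by
      rw [← mul_pow, mul_inv_cancel₀ (Real.exp_pos 1).ne', one_pow]
    have hL : Real.exp 1 ^ lam * (Real.exp 1)⁻¹ ^ lam = 1 := by
      rw [← mul_pow, mul_inv_cancel₀ (Real.exp_pos 1).ne', one_pow]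
    linear_combination ((lam:ℝ)^k * (lam:ℝ)^lam) * hL
      - ((lam:ℝ)^k * (lam:ℝ)^lam * Real.exp 1 ^ k * (Real.exp 1)⁻¹ ^ k) * hK
      - ((lam:ℝ)^k * (lam:ℝ)^lam) * hE
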